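/- arXiv:1109.5249 — 3 statements merged into one kernel-verified Lean document; each statement's English description precedes it below -/
import Mathlib

section
/- Define d_r(x,y) = δ_r(x,y) + δ_r(y,x), where δ_r(x,y) = sup_{γ∈P(x,r)} inf_{μ∈P(y,r)} sup_{t∈[0,1]} d(γ(t),μ(t)). Then d_r is symmetric, satisfies d_r(x,y) ≥ 2d(x,y) (hence is positive for x≠y), and satisfies the triangle inequality d_r(x,z) ≤ d_r(x,y) + d_r(y,z). Thus d_r is a metric on M (assuming all the suprema and infima are finite). -/
open Set

noncomputable def supDist {M : Type*} [MetricSpace M] (γ μ : ℝ → M) : ℝ :=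
  sSup ((fun t => dist (γ t) (μ t)) '' Icc (0:ℝ) 1)

noncomputable def pdelta {M : Type*} [MetricSpace M] (P : M → ℝ → Set (ℝ → M))
    (r : ℝ) (x y : M) : ℝ :=
  sSup ((fun γ => sInf ((fun μ => supDist γ μ) '' P y r)) '' P x r)

/-- The symmetrized pursuit distance d_r(x,y) = δ_r(x,y) + δ_r(y,x). -/
noncomputable def pdist {M : Type*} [MetricSpace M] (P : M → ℝ → Set (ℝ → M))
    (r : ℝ) (x y : M) : ℝ :=
  pdelta P r x y + pdelta P r y x

theorem stmt1 {M : Type*} [MetricSpace M] [CompactSpace M]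
    (P : M → ℝ → Set (ℝ → M)) (r : ℝ)
    (hstart : ∀ z, ∀ γ ∈ P z r, γ 0 = z)
    (hcont : ∀ z, ∀ γ ∈ P z r, ContinuousOn γ (Icc (0:ℝ) 1))
    (hne : ∀ z, (P z r).Nonempty)
    (hfin : ∀ x y : M, ∀ γ ∈ P x r, ∀ μ ∈ P y r,
      BddAbove ((fun t => dist (γ t) (μ t)) '' Icc (0:ℝ) 1))
    (hbdd : ∀ x y : M,
      BddAbove ((fun γ => sInf ((fun μ => supDist γ μ) '' P y r)) '' P x r)) :
    (∀ x y : M, pdist P r x y = pdist P r y x) ∧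
    (∀ x y : M, 2 * dist x y ≤ pdist P r x y) ∧
    (∀ x y : M, x ≠ y → 0 < pdist P r x y) ∧
    (∀ x y z : M, pdist P r x z ≤ pdist P r x y + pdist P r y z) := by
  have h0 : (0:ℝ) ∈ Icc (0:ℝ) 1 := ⟨le_refl 0, zero_le_one⟩
  have hsup_ge : ∀ x y : M, ∀ γ ∈ P x r, ∀ μ ∈ P y r, dist x y ≤ supDist γ μ := by
    intro x y γ hγ μ hμ
    have := le_csSup (hfin x y γ hγ μ hμ) (mem_image_of_mem _ h0)
    rw [hstart x γ hγ, hstart y μ hμ] at this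
    exact this
  have hdelta_ge : ∀ x y : M, dist x y ≤ pdelta P r x y := by
    intro x y
    obtain ⟨γ, hγ⟩ := hne x
    refine le_trans ?_ (le_csSup (hbdd x y) (mem_image_of_mem _ hγ))
    apply le_csInf ((hne y).image _)
    rintro b ⟨μ, hμ, rfl⟩
    exact hsup_ge x y γ hγ μ hμ
  have hdelta_tri : ∀ x y z : M, pdelta P r x z ≤ pdelta P r x y + pdelta P r y z := by
    intro x y z
    show sSup _ ≤ _
    apply csSup_le ((hne x).image _)
    rintro a ⟨γ, hγ, rfl⟩
    dsimp only
    have key : ∀ μ ∈ P y r,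
        sInf ((fun ν => supDist γ ν) '' P z r) - pdelta P r y z ≤ supDist γ μ := by
      intro μ hμ
      have h1 : sInf ((fun ν => supDist μ ν) '' P z r) ≤ pdelta P r y z :=
        le_csSup (hbdd y z) (mem_image_of_mem _ hμ)
      have h2 : sInf ((fun ν => supDist γ ν) '' P z r) ≤
          supDist γ μ + sInf ((fun ν => supDist μ ν) '' P z r) := by
        rw [← sub_le_iff_le_add']
        apply le_csInf ((hne z).image _)
        rintro b ⟨ν, hν, rfl⟩
        dsimp only
        rw [sub_le_iff_le_add']
        refine le_trans (csInf_le ?_ (mem_image_of_mem _ hν)) ?_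
        · refine ⟨0, ?_⟩
          rintro b ⟨ν', hν', rfl⟩
          exact le_trans dist_nonneg (hsup_ge x z γ hγ ν' hν')
        · apply csSup_le ((nonempty_Icc.mpr zero_le_one).image _)
          rintro c ⟨t, ht, rfl⟩
          calc dist (γ t) (ν t) ≤ dist (γ t) (μ t) + dist (μ t) (ν t) :=
                dist_triangle _ _ _
            _ ≤ supDist γ μ + supDist μ ν :=
                add_le_add (le_csSup (hfin x y γ hγ μ hμ) (mem_image_of_mem _ ht))
                  (le_csSup (hfin y z μ hμ ν hν) (mem_image_of_mem _ ht))
      linarith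
    have h3 : sInf ((fun ν => supDist γ ν) '' P z r) - pdelta P r y z ≤
        sInf ((fun μ => supDist γ μ) '' P y r) := by
      apply le_csInf ((hne y).image _)
      rintro b ⟨μ, hμ, rfl⟩
      exact key μ hμ
    have h4 : sInf ((fun μ => supDist γ μ) '' P y r) ≤ pdelta P r x y :=
      le_csSup (hbdd x y) (mem_image_of_mem _ hγ)
    linarith
  refine ⟨fun x y => add_comm _ _, fun x y => ?_, fun x y hxy => ?_, fun x y z => ?_⟩
  · have h1 := hdelta_ge x y
    have h2 := hdelta_ge y x
    rw [dist_comm] at h2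
    unfold pdist
    linarith
  · have := hdelta_ge x y
    have h2 := hdelta_ge y x
    rw [dist_comm] at h2
    have hd : 0 < dist x y := dist_pos.mpr hxy
    unfold pdist
    linarith
  · have t1 := hdelta_tri x y z
    have t2 := hdelta_tri z y x
    unfold pdist
    linarith
end

section
/- Monotonicity in r via reparametrization: if r > s > 0, and the path families satisfy the reparametrization property that every path in P(x,s) can be sped up into P(x,r) (precisely: for γ∈P(x,s), the path γ̂(t)=γ(tr/s) for t≤s/r, γ̂(t)=γ(1) for t>s/r lies in P(x,r)) and conversely every path in P(y,r) can be truncated into P(y,s) (μ̌(t) = μ(ts/r) lies in P(y,s)), then δ_s(x,y) ≤ δ_r(x,y) for all x,y, and hence d_s(x,y) ≤ d_r(x,y). -/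
open Set

theorem stmt6 {M : Type*} [MetricSpace M] (P : M → ℝ → Set (ℝ → M))
    (r s : ℝ) (hs : 0 < s) (hsr : s < r)
    (hstart : ∀ z t, ∀ γ ∈ P z t, γ 0 = z)
    (hcont : ∀ z t, ∀ γ ∈ P z t, ContinuousOn γ (Icc (0:ℝ) 1))
    (hne : ∀ z t, (P z t).Nonempty)
    -- speeding up: every path in P(x,s) gives a path in P(x,r)
    (hspeed : ∀ x : M, ∀ γ ∈ P x s,
      (fun t : ℝ => if t ≤ s / r then γ (t * r / s) else γ 1) ∈ P x r)
    -- truncation: every path in P(y,r) gives a path in P(y,s)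
    (htrunc : ∀ y : M, ∀ μ ∈ P y r,
      (fun t : ℝ => μ (t * s / r)) ∈ P y s)
    (hbdd : ∀ t : ℝ, ∀ x y : M,
      BddAbove ((fun γ => sInf ((fun μ => supDist γ μ) '' P y t)) '' P x t)) :
    (∀ x y : M, pdelta P s x y ≤ pdelta P r x y) ∧
    (∀ x y : M, pdist P s x y ≤ pdist P r x y) := by
  have hr : 0 < r := hs.trans hsr
  have key : ∀ x y : M, pdelta P s x y ≤ pdelta P r x y := by
    intro x y
    apply Real.sSup_le
    · rintro _ ⟨γ, hγ, rfl⟩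
      set γ' : ℝ → M := fun t : ℝ => if t ≤ s / r then γ (t * r / s) else γ 1 with hγ'def
      have hγ' : γ' ∈ P x r := hspeed x γ hγ
      have step : sInf ((fun μ => supDist γ μ) '' P y s)
          ≤ sInf ((fun μ => supDist γ' μ) '' P y r) := by
        apply le_csInf ((hne y r).image _)
        rintro _ ⟨μ, hμ, rfl⟩
        have hμ' : (fun t : ℝ => μ (t * s / r)) ∈ P y s := htrunc y μ hμ
        have h1 : sInf ((fun μ => supDist γ μ) '' P y s)
            ≤ supDist γ (fun t : ℝ => μ (t * s / r)) := by
          apply csInf_le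
          · refine ⟨0, ?_⟩
            rintro _ ⟨ν, hν, rfl⟩
            apply Real.sSup_nonneg
            rintro _ ⟨t, ht, rfl⟩
            exact dist_nonneg
          · exact mem_image_of_mem _ hμ'
        refine h1.trans ?_
        -- supDist γ μ̌ ≤ supDist γ' μ
        have hbddim : BddAbove ((fun t => dist (γ' t) (μ t)) '' Icc (0:ℝ) 1) := by
          have hc : ContinuousOn (fun t => dist (γ' t) (μ t)) (Icc (0:ℝ) 1) :=
            by have := Continuous.comp_continuousOn continuous_dist (ContinuousOn.prodMk (hcont x r γ' hγ') (hcont y r μ hμ)); exact this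
          exact (isCompact_Icc.image_of_continuousOn hc).bddAbove
        have hsup0 : 0 ≤ supDist γ' μ := by
          have := le_csSup hbddim (mem_image_of_mem _ (by
            exact ⟨le_refl (0:ℝ), zero_le_one⟩ : (0:ℝ) ∈ Icc (0:ℝ) 1))
          exact le_trans dist_nonneg this
        apply Real.sSup_le _ hsup0
        rintro _ ⟨t, ht, rfl⟩
        have hts : t * s / r ∈ Icc (0:ℝ) 1 := by
          constructor
          · have := ht.1
            positivity
          · rw [div_le_one hr]
            nlinarith [ht.1, ht.2, hs.le]
        have hle : t * s / r ≤ s / r := by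
          have : t * s ≤ s := by nlinarith [ht.1, ht.2, hs.le]
          exact div_le_div_of_nonneg_right this hr.le |>.trans_eq rfl
        have heq : γ' (t * s / r) = γ t := by
          rw [hγ'def]
          simp only [if_pos hle]
          congr 1
          field_simp
        have := le_csSup hbddim (mem_image_of_mem _ hts)
        simp only [heq] at this
        exact this
      refine step.trans ?_
      exact le_csSup (hbdd r x y) (mem_image_of_mem _ hγ')
    · apply Real.sSup_nonneg
      rintro _ ⟨γ, hγ, rfl⟩
      apply le_csInf ((hne y r).image _)
      rintro _ ⟨μ, hμ, rfl⟩
      apply Real.sSup_nonneg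
      rintro _ ⟨t, ht, rfl⟩
      exact dist_nonneg
  exact ⟨key, fun x y => add_le_add (key x y) (key y x)⟩
end

section
/- Ball-Box controllability implies zero entropy (abstract form): let (M,d) be a compact metric space with path families P(x,r) satisfying the uniform Lipschitz bound d(γ(t),γ(s)) ≤ K·r·|t−s| for γ∈P(x,r), the concatenation property from the pursuit bound lemma, and the controllability property: there exist n∈ℕ and ρ₀>0 such that for all 0<ρ<ρ₀, any x,y with d(x,y) < ρⁿ can be joined by a path in P(x,ρ) ending at y. Then for each ε>0 the numbers N(d_r,ε) are bounded uniformly in r, and hence the entropy h = lim_{ε→0+} limsup_{r→∞} (log N(d_r,ε))/r is zero. -/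
open Set Filter

def IsSep {X : Type*} (ρ : X → X → ℝ) (ε : ℝ) (S : Set X) : Prop :=
  ∀ x ∈ S, ∀ y ∈ S, x ≠ y → ε ≤ ρ x y

noncomputable def sepNum {X : Type*} (ρ : X → X → ℝ) (ε : ℝ) : ℕ∞ :=
  ⨆ S : {S : Set X // S.Finite ∧ IsSep ρ ε S}, (S.1.ncard : ℕ∞)

noncomputable def entExpr {X : Type*} (dfam : ℝ → X → X → ℝ) (ε : ℝ) : ℝ :=
  limsup (fun r : ℝ => Real.log ((sepNum (dfam r) ε).toNat) / r) atTop

section Aux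

variable {M : Type*} [MetricSpace M]

lemma supDist_nonneg (γ μ : ℝ → M) : 0 ≤ supDist γ μ :=
  Real.sSup_nonneg (by rintro a ⟨t, -, rfl⟩; exact dist_nonneg)

lemma supDist_le {γ μ : ℝ → M} {C : ℝ} (hC : 0 ≤ C)
    (h : ∀ t ∈ Icc (0:ℝ) 1, dist (γ t) (μ t) ≤ C) : supDist γ μ ≤ C :=
  Real.sSup_le (by rintro a ⟨t, ht, rfl⟩; exact h t ht) hC

lemma pdelta_le {P : M → ℝ → Set (ℝ → M)} {r : ℝ} {x y : M} {C : ℝ} (hC : 0 ≤ C)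
    (h : ∀ γ ∈ P x r, ∃ μ ∈ P y r, supDist γ μ ≤ C) : pdelta P r x y ≤ C := by
  refine Real.sSup_le ?_ hC
  rintro a ⟨γ, hγ, rfl⟩
  obtain ⟨μ, hμ, hb⟩ := h γ hγ
  refine le_trans (csInf_le ?_ ⟨μ, hμ, rfl⟩) hb
  exact ⟨0, by rintro b ⟨ν, -, rfl⟩; exact supDist_nonneg _ _⟩

lemma log_natCast_nonneg (n : ℕ) : 0 ≤ Real.log n := by
  rcases Nat.eq_zero_or_pos n with h | h
  · simp [h]
  · exact Real.log_nonneg (by exact_mod_cast h)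

end Aux

theorem stmt19 {M : Type*} [MetricSpace M] [CompactSpace M]
    (P : M → ℝ → Set (ℝ → M)) (K : ℝ) (hK : 0 < K)
    (hstart : ∀ z r, ∀ γ ∈ P z r, γ 0 = z)
    (hne : ∀ z r, 0 < r → (P z r).Nonempty)
    -- (i) uniform Lipschitz bound on paths of speed at most r
    (hLip : ∀ z r, ∀ γ ∈ P z r, ∀ t ∈ Icc (0:ℝ) 1, ∀ s ∈ Icc (0:ℝ) 1,
      dist (γ t) (γ s) ≤ K * r * |t - s|)
    -- (ii) pursuit bound coming from closure under concatenation
    (hpursuit : ∀ ρ > (0:ℝ), ∀ x y : M,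
      (∃ η ∈ P y ρ, η 0 = y ∧ η 1 = x) → ∀ r > ρ, pdist P r x y ≤ 2 * K * ρ)
    -- (iii) controllability from the Ball-Box theorem
    (hctrl : ∃ n : ℕ, ∃ ρ₀ > (0:ℝ), ∀ ρ : ℝ, 0 < ρ → ρ < ρ₀ → ∀ x y : M,
      dist x y < ρ ^ n → ∃ η ∈ P x ρ, η 0 = x ∧ η 1 = y) :
    (∀ ε > (0:ℝ), ∃ B : ℕ, ∀ r > (0:ℝ), sepNum (pdist P r) ε ≤ (B : ℕ∞)) ∧
    Tendsto (entExpr (pdist P)) (nhdsWithin 0 (Ioi 0)) (nhds 0) := by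
  obtain ⟨n, ρ₀, hρ₀, hc⟩ := hctrl
  have key : ∀ ε > (0:ℝ), ∃ B : ℕ, ∀ r > (0:ℝ), sepNum (pdist P r) ε ≤ (B : ℕ∞) := by
    intro ε hε
    set ρ : ℝ := min (ρ₀ / 2) (ε / (8 * K)) with hρdef
    have hρpos : 0 < ρ := lt_min (by linarith) (div_pos hε (by linarith))
    have hρlt : ρ < ρ₀ := lt_of_le_of_lt (min_le_left _ _) (by linarith)
    have hρε : K * ρ ≤ ε / 8 := by
      have h1 : ρ ≤ ε / (8 * K) := min_le_right _ _
      have : K * ρ ≤ K * (ε / (8 * K)) := by nlinarith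
      calc K * ρ ≤ K * (ε / (8 * K)) := this
        _ = ε / 8 := by field_simp
    set δ : ℝ := min (ρ ^ n) (ε / 4) with hδdef
    have hδpos : 0 < δ := lt_min (pow_pos hρpos n) (by linarith)
    obtain ⟨t, -, htfin, htcov⟩ := finite_cover_balls_of_compact
      (isCompact_univ : IsCompact (univ : Set M)) (show (0:ℝ) < δ / 3 by linarith)
    refine ⟨t.ncard, ?_⟩
    intro r hr
    refine iSup_le ?_
    rintro ⟨S, hSfin, hSsep⟩
    simp only
    rw [Nat.cast_le]
    -- S is δ-separated for the metric d
    have hsepd : ∀ x ∈ S, ∀ y ∈ S, x ≠ y → δ ≤ dist x y := by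
      intro x hx y hy hxy
      by_contra hlt
      push_neg at hlt
      have hdxy : dist x y < ε / 4 := lt_of_lt_of_le hlt (min_le_right _ _)
      have hpd : pdist P r x y < ε := by
        rcases le_or_gt r ρ with hrρ | hrρ
        · -- small r : both pdelta's are at most dist x y + 2 K r
          have hKr : 0 ≤ K * r := le_of_lt (mul_pos hK hr)
          have hbound : ∀ a b : M, pdelta P r a b ≤ dist a b + 2 * (K * r) := by
            intro a b
            refine pdelta_le (by positivity) ?_
            intro γ hγ
            obtain ⟨μ, hμ⟩ := hne b r hr
            refine ⟨μ, hμ, supDist_le (by positivity) ?_⟩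
            intro s hs
            have h0 : (0:ℝ) ∈ Icc (0:ℝ) 1 := by constructor <;> norm_num
            have hγs := hLip a r γ hγ s hs 0 h0
            have hμs := hLip b r μ hμ 0 h0 s hs
            have habs : |s - 0| ≤ 1 := by
              rw [sub_zero, abs_of_nonneg hs.1]; exact hs.2
            have habs' : |0 - s| ≤ 1 := by rw [abs_sub_comm]; exact habs
            have hγ0 : γ 0 = a := hstart a r γ hγ
            have hμ0 : μ 0 = b := hstart b r μ hμ
            have hd1 : dist (γ s) a ≤ K * r := by
              rw [← hγ0]; nlinarith [hγs]
            have hd2 : dist b (μ s) ≤ K * r := by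
              rw [← hμ0]; nlinarith [hμs]
            calc dist (γ s) (μ s) ≤ dist (γ s) a + dist a b + dist b (μ s) :=
                  dist_triangle4 _ _ _ _
              _ ≤ K * r + dist a b + K * r := by linarith
              _ = dist a b + 2 * (K * r) := by ring
          have h1 := hbound x y
          have h2 := hbound y x
          have hKrρ : K * r ≤ ε / 8 := le_trans (by nlinarith) hρε
          rw [pdist, dist_comm y x] at *
          nlinarith [h1, h2]
        · -- large r : pursuit bound
          have hd : dist y x < ρ ^ n := by
            rw [dist_comm]
            exact lt_of_lt_of_le hlt (min_le_left _ _)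
          obtain ⟨η, hη, hη0, hη1⟩ := hc ρ hρpos hρlt y x hd
          have := hpursuit ρ hρpos x y ⟨η, hη, hη0, hη1⟩ r hrρ
          nlinarith [this, hρε]
      exact absurd (hSsep x hx y hy hxy) (by linarith)
    -- map each point of S to a center of the cover
    have hmap : ∀ x : M, ∃ c ∈ t, x ∈ Metric.ball c (δ / 3) := by
      intro x
      have := htcov (mem_univ x)
      simpa using this
    choose f hft hfb using hmap
    have hinj : InjOn f S := by
      intro a ha b hb hab
      by_contra hne'
      have h1 : dist a (f a) < δ / 3 := Metric.mem_ball.mp (hfb a)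
      have h2 : dist b (f b) < δ / 3 := Metric.mem_ball.mp (hfb b)
      have hd : dist a b ≤ dist a (f a) + dist (f b) b := by
        rw [← hab]
        calc dist a b ≤ dist a (f a) + dist (f a) b := dist_triangle _ _ _
          _ = dist a (f a) + dist (f a) b := rfl
      rw [dist_comm (f b) b] at hd
      have := hsepd a ha b hb hne'
      linarith
    exact Set.ncard_le_ncard_of_injOn f (fun a _ => hft a) hinj htfin
  refine ⟨key, ?_⟩
  have hzero : ∀ ε ∈ Ioi (0:ℝ), entExpr (pdist P) ε = 0 := by
    intro ε hε
    obtain ⟨B, hB⟩ := key ε hε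
    have hten : Tendsto (fun r : ℝ =>
        Real.log ((sepNum (pdist P r) ε).toNat) / r) atTop (nhds 0) := by
      have hupper : Tendsto (fun r : ℝ => Real.log (B + 1) / r) atTop (nhds 0) :=
        Tendsto.div_atTop tendsto_const_nhds tendsto_id
      refine tendsto_of_tendsto_of_tendsto_of_le_of_le' tendsto_const_nhds hupper ?_ ?_
      · filter_upwards [eventually_ge_atTop (1:ℝ)] with r hr
        exact div_nonneg (log_natCast_nonneg _) (by linarith)
      · filter_upwards [eventually_ge_atTop (1:ℝ)] with r hr
        have hr0 : (0:ℝ) < r := by linarith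
        have hle : (sepNum (pdist P r) ε).toNat ≤ B :=
          le_trans (ENat.toNat_le_toNat (hB r hr0) (by simp)) (by simp)
        have hlog : Real.log ((sepNum (pdist P r) ε).toNat) ≤ Real.log (B + 1) := by
          rcases Nat.eq_zero_or_pos ((sepNum (pdist P r) ε).toNat) with h0 | hpos
          · rw [h0]
            simp only [Nat.cast_zero, Real.log_zero]
            exact Real.log_nonneg (le_add_of_nonneg_left (by positivity))
          · refine Real.log_le_log (by exact_mod_cast hpos) ?_
            have : ((sepNum (pdist P r) ε).toNat : ℝ) ≤ (B : ℝ) := by exact_mod_cast hle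
            linarith
        exact div_le_div_of_nonneg_right hlog hr0.le
    exact hten.limsup_eq
  refine Tendsto.congr' ?_ (tendsto_const_nhds : Tendsto (fun _ : ℝ => (0:ℝ)) _ _)
  filter_upwards [self_mem_nhdsWithin] with ε hε
  exact (hzero ε hε).symm
end
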